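/- Let G be a Lie algebra that splits as a direct sum of vector spaces G = G₊ ⊕ G₋, where G₊ and G₋ are Lie subalgebras, and let P₊, P₋ denote the linear projections onto G₊ and G₋ respectively. Define R := (P₊ − P₋)/2 and the R-bracket [a,b]_R := [R a, b] + [a, R b]. Then the bracket [·,·]_R is bilinear, antisymmetric, and satisfies the Jacobi identity, i.e. it defines a second Lie algebra structure on the underlying vector space of G. -/
import Mathlib


/-- If a Lie algebra `L` splits as a vector-space direct sum of two Lie subalgebras
`G₊` and `G₋`, with projections `P₊`, `P₋`, then the `R`-bracket
`[a,b]_R := [R a, b] + [a, R b]` with `R = (P₊ − P₋)/2` is bilinear, antisymmetric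
and satisfies the Jacobi identity, i.e. it defines a second Lie algebra structure. -/
theorem r_bracket_second_lie_structure {L : Type*} [LieRing L] [LieAlgebra ℝ L]
    (Gp Gn : LieSubalgebra ℝ L) (Pp Pn : L →ₗ[ℝ] L)
    (hmemp : ∀ x : L, Pp x ∈ Gp) (hmemn : ∀ x : L, Pn x ∈ Gn)
    (hsum : ∀ x : L, Pp x + Pn x = x)
    (hpp : ∀ x ∈ Gp, Pp x = x) (hnn : ∀ x ∈ Gn, Pn x = x)
    (R : L → L) (hR : ∀ x, R x = (2⁻¹ : ℝ) • (Pp x - Pn x))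
    (Rb : L → L → L) (hRb : ∀ a b, Rb a b = ⁅R a, b⁆ + ⁅a, R b⁆) :
    (∀ (c : ℝ) (a a' b : L), Rb (c • a + a') b = c • Rb a b + Rb a' b) ∧
    (∀ (c : ℝ) (a b b' : L), Rb a (c • b + b') = c • Rb a b + Rb a b') ∧
    (∀ a b : L, Rb a b = - Rb b a) ∧
    (∀ a b c : L, Rb a (Rb b c) + Rb b (Rb c a) + Rb c (Rb a b) = 0) := by
  -- `Pn x = x - Pp x`
  have hn : ∀ x : L, Pn x = x - Pp x := fun x => by
    have := hsum x; linear_combination (norm := module) this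
  -- Key reformulation of the `R`-bracket
  have key : ∀ a b : L, Rb a b = ⁅Pp a, Pp b⁆ - ⁅Pn a, Pn b⁆ := by
    intro a b
    rw [hRb, hR, hR, hn a, hn b]
    simp only [smul_sub, sub_lie, lie_sub, smul_lie, lie_smul]
    module
  -- `Pp` kills elements of `Gn`
  have hpn : ∀ x ∈ Gn, Pp x = 0 := fun x hx => by
    have h1 := hsum x
    rw [hnn x hx] at h1
    linear_combination (norm := module) h1
  -- `Pn` kills elements of `Gp`
  have hnp : ∀ x ∈ Gp, Pn x = 0 := fun x hx => by
    have h1 := hsum x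
    rw [hpp x hx] at h1
    linear_combination (norm := module) h1
  -- projections of the `R`-bracket
  have hPpRb : ∀ a b : L, Pp (Rb a b) = ⁅Pp a, Pp b⁆ := by
    intro a b
    rw [key, map_sub, hpp _ (Gp.lie_mem (hmemp a) (hmemp b)),
      hpn _ (Gn.lie_mem (hmemn a) (hmemn b)), sub_zero]
  have hPnRb : ∀ a b : L, Pn (Rb a b) = -⁅Pn a, Pn b⁆ := by
    intro a b
    rw [key, map_sub, hnp _ (Gp.lie_mem (hmemp a) (hmemp b)),
      hnn _ (Gn.lie_mem (hmemn a) (hmemn b)), zero_sub]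
  refine ⟨?_, ?_, ?_, ?_⟩
  · intro c a a' b
    simp only [key, map_add, map_smul, add_lie, smul_lie, smul_sub]
    abel
  · intro c a b b'
    simp only [key, map_add, map_smul, lie_add, lie_smul, smul_sub]
    abel
  · intro a b
    simp only [key]
    rw [← lie_skew (Pp a) (Pp b), ← lie_skew (Pn a) (Pn b)]
    abel
  · intro a b c
    rw [key a (Rb b c), key b (Rb c a), key c (Rb a b), hPpRb, hPpRb, hPpRb,
      hPnRb, hPnRb, hPnRb]
    simp only [lie_neg, sub_neg_eq_add]
    have h1 := lie_jacobi (Pp a) (Pp b) (Pp c)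
    have h2 := lie_jacobi (Pn a) (Pn b) (Pn c)
    linear_combination (norm := abel) h1 + h2
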